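/- arXiv:2206.02604 — 3 statements merged into one kernel-verified Lean document; each statement's English description precedes it below -/
import Mathlib

section
/- Let m ≥ 2 be an integer, ν > 0, and let V be uniformly distributed on the closed Euclidean ball of radius ν centered at the origin in ℝ^m. Then for every unit vector e ∈ ℝ^m and every t with 0 < t < 1, P(|⟨e, V⟩| > tν) ≤ (m/√π) · exp(−(m+1)t²/2). -/
open MeasureTheory Metric

private lemma key_deriv' (s : ℝ) (h0 : 0 ≤ s) (h1 : s ≤ 1) :
    (1 - s) * Real.exp (s + s^2/2 + s^3/3) ≤ 1 := by
  set f : ℝ → ℝ := fun s => (1 - s) * Real.exp (s + s^2/2 + s^3/3) with hf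
  have hd : ∀ x : ℝ, HasDerivAt f (-(x^3) * Real.exp (x + x^2/2 + x^3/3)) x := by
    intro x
    have hp : HasDerivAt (fun s : ℝ => s + s^2/2 + s^3/3) (1 + x + x^2) x := by
      have := ((hasDerivAt_id x).add ((hasDerivAt_pow 2 x).div_const 2)).add
        ((hasDerivAt_pow 3 x).div_const 3)
      refine this.congr_deriv ?_
      push_cast; ring
    have h1 : HasDerivAt (fun s : ℝ => 1 - s) (-1) x := by
      simpa using (hasDerivAt_id x).const_sub 1
    have := h1.mul hp.exp
    refine this.congr_deriv ?_
    ring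
  have hanti : AntitoneOn f (Set.Icc 0 1) := by
    apply antitoneOn_of_deriv_nonpos (convex_Icc 0 1)
    · exact Continuous.continuousOn (by continuity)
    · intro x hx
      exact (hd x).differentiableAt.differentiableWithinAt
    · intro x hx
      rw [interior_Icc] at hx
      rw [(hd x).deriv]
      have hx' : (0:ℝ) < x := hx.1
      have hE := Real.exp_pos (x + x^2/2 + x^3/3)
      nlinarith [mul_pos (pow_pos hx' 3) hE]
  have := hanti (Set.mem_Icc.2 ⟨le_refl 0, zero_le_one⟩) (Set.mem_Icc.2 ⟨h0, h1⟩) h0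
  simpa [hf] using this

private lemma one_sub_le_exp' (s : ℝ) (h0 : 0 ≤ s) (h1 : s ≤ 1) :
    1 - s ≤ Real.exp (-(s + s^2/2 + s^3/3)) := by
  have h := key_deriv' s h0 h1
  have hE := Real.exp_pos (s + s^2/2 + s^3/3)
  rw [Real.exp_neg, ← one_div, le_div_iff₀ hE]
  linarith

private lemma exp_le_inv_one_sub' {x : ℝ} (h0 : 0 ≤ x) (h1 : x < 1) :
    Real.exp x ≤ 1 / (1 - x) := by
  have h : 1 - x ≤ Real.exp (-x) := by linarith [Real.add_one_le_exp (-x)]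
  have h2 : 0 < Real.exp (-x) := Real.exp_pos _
  rw [le_div_iff₀ (by linarith : (0:ℝ) < 1 - x)]
  calc Real.exp x * (1 - x) ≤ Real.exp x * Real.exp (-x) := by
        have := Real.exp_pos x; nlinarith
    _ = 1 := by rw [← Real.exp_add]; simp

private lemma squared_bound' (m : ℕ) (hm : 2 ≤ m) (s : ℝ) (h0 : 0 < s) (h1 : s < 1) :
    (1 - s)^m * Real.exp (((m:ℝ)+1)*s) ≤ (m:ℝ)^2 / Real.pi := by
  have hbase : (1 - s)^m ≤ Real.exp (-(m:ℝ) * (s + s^2/2 + s^3/3)) := by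
    have h := one_sub_le_exp' s h0.le h1.le
    calc (1 - s)^m ≤ (Real.exp (-(s + s^2/2 + s^3/3)))^m :=
          pow_le_pow_left₀ (by linarith) h m
      _ = Real.exp (-(m:ℝ) * (s + s^2/2 + s^3/3)) := by
          rw [← Real.exp_nat_mul]; ring_nf
  have hmain : (1 - s)^m * Real.exp (((m:ℝ)+1)*s)
      ≤ Real.exp (s - (m:ℝ)*s^2/2 - (m:ℝ)*s^3/3) := by
    calc (1 - s)^m * Real.exp (((m:ℝ)+1)*s)
        ≤ Real.exp (-(m:ℝ) * (s + s^2/2 + s^3/3)) * Real.exp (((m:ℝ)+1)*s) :=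
          mul_le_mul_of_nonneg_right hbase (Real.exp_pos _).le
      _ = Real.exp (s - (m:ℝ)*s^2/2 - (m:ℝ)*s^3/3) := by
          rw [← Real.exp_add]; ring_nf
  have hpi : Real.pi < 3.15 := Real.pi_lt_d2
  have hpipos := Real.pi_pos
  rcases eq_or_lt_of_le hm with hm2 | hm3
  · -- m = 2
    have hm2' : (m:ℝ) = 2 := by exact_mod_cast hm2.symm
    have hexp : s - (m:ℝ)*s^2/2 - (m:ℝ)*s^3/3 ≤ 21/100 := by
      rw [hm2']; nlinarith [sq_nonneg (s - 0.366), mul_nonneg (sq_nonneg (s - 0.366)) h0.le]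
    have : Real.exp (s - (m:ℝ)*s^2/2 - (m:ℝ)*s^3/3) ≤ 100/79 := by
      calc Real.exp (s - (m:ℝ)*s^2/2 - (m:ℝ)*s^3/3) ≤ Real.exp (21/100) :=
            Real.exp_le_exp.2 hexp
        _ ≤ 1 / (1 - 21/100) := exp_le_inv_one_sub' (by norm_num) (by norm_num)
        _ = 100/79 := by norm_num
    have hR : (100:ℝ)/79 ≤ (m:ℝ)^2 / Real.pi := by
      rw [hm2', le_div_iff₀ hpipos]; nlinarith
    linarith [hmain]
  · -- m ≥ 3
    have hm3' : (3:ℝ) ≤ (m:ℝ) := by exact_mod_cast hm3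
    have hexp : s - (m:ℝ)*s^2/2 - (m:ℝ)*s^3/3 ≤ 1/6 := by
      have hc1 : 0 ≤ ((m:ℝ) - 3) * s^2 := mul_nonneg (by linarith) (sq_nonneg s)
      have hc2 : 0 ≤ (m:ℝ) * s^3 := by positivity
      nlinarith [sq_nonneg (1 - 3*s)]
    have : Real.exp (s - (m:ℝ)*s^2/2 - (m:ℝ)*s^3/3) ≤ 6/5 := by
      calc Real.exp (s - (m:ℝ)*s^2/2 - (m:ℝ)*s^3/3) ≤ Real.exp (1/6) :=
            Real.exp_le_exp.2 hexp
        _ ≤ 1 / (1 - 1/6) := exp_le_inv_one_sub' (by norm_num) (by norm_num)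
        _ = 6/5 := by norm_num
    have hR : (6:ℝ)/5 ≤ (m:ℝ)^2 / Real.pi := by
      rw [le_div_iff₀ hpipos]; nlinarith
    linarith [hmain]

private lemma sqrt_pow_bound' (m : ℕ) (hm : 2 ≤ m) (t : ℝ) (ht0 : 0 < t) (ht1 : t < 1) :
    (Real.sqrt (1 - t^2))^m
      ≤ (m / Real.sqrt Real.pi) * Real.exp (-((m:ℝ) + 1) * t ^ 2 / 2) := by
  have hs0 : 0 < t^2 := by positivity
  have hs1 : t^2 < 1 := by nlinarith
  have hmpos : (0:ℝ) < m := by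
    have : (2:ℝ) ≤ m := by exact_mod_cast hm
    linarith
  set A : ℝ := (Real.sqrt (1 - t^2))^m with hA
  set B : ℝ := (m / Real.sqrt Real.pi) * Real.exp (-((m:ℝ) + 1) * t ^ 2 / 2) with hBdef
  have hAnn : 0 ≤ A := pow_nonneg (Real.sqrt_nonneg _) m
  have hBpos : 0 < B := by
    apply mul_pos (div_pos hmpos (Real.sqrt_pos.2 Real.pi_pos)) (Real.exp_pos _)
  have hA2 : A^2 = (1 - t^2)^m := by
    rw [hA, ← pow_mul, mul_comm m 2, pow_mul, Real.sq_sqrt (by linarith)]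
  have hB2 : B^2 = ((m:ℝ)^2 / Real.pi) * Real.exp (-((m:ℝ)+1) * t^2) := by
    have hexp2 : (Real.exp (-((m:ℝ) + 1) * t ^ 2 / 2))^2
        = Real.exp (-((m:ℝ)+1) * t^2) := by
      rw [← Real.exp_nat_mul]
      norm_num
      ring_nf
    rw [hBdef, mul_pow, div_pow, Real.sq_sqrt Real.pi_pos.le, hexp2]
  have hsq : A^2 ≤ B^2 := by
    rw [hA2, hB2]
    have hE := Real.exp_pos (((m:ℝ)+1) * t^2)
    have h := squared_bound' m hm (t^2) hs0 hs1
    have : Real.exp (-((m:ℝ)+1) * t^2) = (Real.exp (((m:ℝ)+1) * t^2))⁻¹ := by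
      rw [← Real.exp_neg]; ring_nf
    rw [this, mul_comm ((m:ℝ)^2/Real.pi), ← div_eq_inv_mul, le_div_iff₀ hE]
    linarith [h]
  calc A = Real.sqrt (A^2) := (Real.sqrt_sq hAnn).symm
    _ ≤ Real.sqrt (B^2) := Real.sqrt_le_sqrt hsq
    _ = B := Real.sqrt_sq hBpos.le

private lemma halfball_le' {m : ℕ} (c e : EuclideanSpace ℝ (Fin m)) (r : ℝ) :
    volume (closedBall c r ∩ {x | (inner ℝ e c : ℝ) < inner ℝ e x}) * 2
      ≤ volume (closedBall c r) := by
  set T : Set (EuclideanSpace ℝ (Fin m)) :=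
    closedBall c r ∩ {x | (inner ℝ e c : ℝ) < inner ℝ e x} with hT
  set T' : Set (EuclideanSpace ℝ (Fin m)) :=
    closedBall c r ∩ {x | (inner ℝ e x : ℝ) < inner ℝ e c} with hT'
  have hcont : Continuous fun x : EuclideanSpace ℝ (Fin m) => (inner ℝ e x : ℝ) :=
    continuous_const.inner continuous_id
  have hmeasT' : MeasurableSet T' :=
    (measurableSet_closedBall).inter (measurableSet_lt hcont.measurable measurable_const)
  have hphi : MeasurePreserving (fun x => ((2:ℝ) • c) - x)
      (volume : Measure (EuclideanSpace ℝ (Fin m))) volume :=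
    Measure.measurePreserving_sub_left volume ((2:ℝ) • c)
  have hpre : (fun x => ((2:ℝ) • c) - x) ⁻¹' T' = T := by
    ext x
    simp only [hT, hT', Set.mem_preimage, Set.mem_inter_iff, Set.mem_setOf_eq,
      mem_closedBall]
    have hnorm : dist ((2:ℝ) • c - x) c = dist x c := by
      rw [dist_eq_norm, dist_eq_norm]
      have : (2:ℝ) • c - x - c = -(x - c) := by module
      rw [this, norm_neg]
    have hinner : (inner ℝ e ((2:ℝ) • c - x) : ℝ) = 2 * inner ℝ e c - inner ℝ e x := by
      rw [inner_sub_right, inner_smul_right]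
    constructor
    · rintro ⟨h1, h2⟩
      rw [hnorm] at h1
      rw [hinner] at h2
      exact ⟨h1, by linarith⟩
    · rintro ⟨h1, h2⟩
      rw [hnorm]
      rw [hinner]
      exact ⟨h1, by linarith⟩
  have hvol : volume T = volume T' := by
    rw [← hpre]
    exact hphi.measure_preimage hmeasT'.nullMeasurableSet
  have hdisj : Disjoint T T' := by
    rw [Set.disjoint_left]
    rintro x ⟨-, hx1⟩ ⟨-, hx2⟩
    simp only [Set.mem_setOf_eq] at hx1 hx2
    linarith
  have hsub : T ∪ T' ⊆ closedBall c r := by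
    rintro x (⟨h, -⟩ | ⟨h, -⟩) <;> exact h
  calc volume T * 2 = volume T + volume T' := by rw [← hvol]; ring
    _ = volume (T ∪ T') := (measure_union hdisj hmeasT').symm
    _ ≤ volume (closedBall c r) := measure_mono hsub

set_option maxHeartbeats 1000000 in
/-- Tail bound for the projection of a uniform point of the `m`-dimensional
Euclidean ball of radius `ν` onto a unit direction: the uniform measure of the
set where the projection exceeds `tν` in absolute value is at most
`(m/√π)·exp(-(m+1)t²/2)`. -/
theorem uniform_ball_projection_tail (m : ℕ) (hm : 2 ≤ m) (ν : ℝ) (hν : 0 < ν)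
    (e : EuclideanSpace ℝ (Fin m)) (he : ‖e‖ = 1)
    (t : ℝ) (ht0 : 0 < t) (ht1 : t < 1) :
    ((volume (Metric.closedBall (0 : EuclideanSpace ℝ (Fin m)) ν))⁻¹ •
        volume.restrict (Metric.closedBall (0 : EuclideanSpace ℝ (Fin m)) ν))
      {x : EuclideanSpace ℝ (Fin m) | t * ν < |(inner ℝ e x : ℝ)|}
    ≤ ENNReal.ofReal ((m / Real.sqrt Real.pi) *
        Real.exp (-((m : ℝ) + 1) * t ^ 2 / 2)) := by
  classical
  set B : Set (EuclideanSpace ℝ (Fin m)) := Metric.closedBall 0 ν with hB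
  set S : Set (EuclideanSpace ℝ (Fin m)) := {x | t * ν < |(inner ℝ e x : ℝ)|} with hS
  have hcont : Continuous fun x : EuclideanSpace ℝ (Fin m) => (inner ℝ e x : ℝ) :=
    continuous_const.inner continuous_id
  have hSmeas : MeasurableSet S :=
    measurableSet_lt measurable_const hcont.abs.measurable
  have h1t : (0:ℝ) < 1 - t^2 := by nlinarith
  set r : ℝ := ν * Real.sqrt (1 - t^2) with hr
  have hrpos : 0 < r := mul_pos hν (Real.sqrt_pos.2 h1t)
  set c : EuclideanSpace ℝ (Fin m) := (t * ν) • e with hc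
  have htν : 0 < t * ν := mul_pos ht0 hν
  have hnc : ‖c‖ = t * ν := by
    rw [hc, norm_smul, he, Real.norm_eq_abs, abs_of_pos htν, mul_one]
  have hec : (inner ℝ e c : ℝ) = t * ν := by
    rw [hc, real_inner_smul_right, real_inner_self_eq_norm_sq, he]
    ring
  have hr2 : r^2 = ν^2 * (1 - t^2) := by
    rw [hr, mul_pow, Real.sq_sqrt (by linarith)]
  -- cap inclusion (positive side)
  have hcap : ∀ x ∈ S ∩ B, t * ν < (inner ℝ e x : ℝ) → x ∈ closedBall c r := by
    rintro x ⟨-, hxB⟩ hx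
    have hnx : ‖x‖ ≤ ν := by rwa [hB, mem_closedBall, dist_zero_right] at hxB
    have hxc : (inner ℝ x c : ℝ) = (t * ν) * inner ℝ e x := by
      rw [real_inner_comm, hc, real_inner_smul_left]
    have hsq : ‖x - c‖^2 ≤ r^2 := by
      have hns := norm_sub_sq_real x c
      rw [hxc, hnc] at hns
      have hcross : (t * ν) * (t * ν) ≤ (t * ν) * (inner ℝ e x : ℝ) :=
        mul_le_mul_of_nonneg_left hx.le htν.le
      have hxle : ‖x‖^2 ≤ ν^2 := by nlinarith [norm_nonneg x]
      rw [hr2]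
      nlinarith
    rw [mem_closedBall, dist_eq_norm]
    nlinarith [norm_nonneg (x - c), hrpos]
  -- cap inclusion (negative side)
  have hcapneg : ∀ x ∈ S ∩ B, (inner ℝ e x : ℝ) < -(t * ν) → x ∈ closedBall (-c) r := by
    rintro x ⟨-, hxB⟩ hx
    have hnx : ‖x‖ ≤ ν := by rwa [hB, mem_closedBall, dist_zero_right] at hxB
    have hxc : (inner ℝ x (-c) : ℝ) = -((t * ν) * inner ℝ e x) := by
      rw [inner_neg_right, real_inner_comm, hc, real_inner_smul_left]
    have hsq : ‖x - (-c)‖^2 ≤ r^2 := by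
      have hns := norm_sub_sq_real x (-c)
      rw [hxc, norm_neg, hnc] at hns
      have hcross : (t * ν) * (inner ℝ e x : ℝ) ≤ (t * ν) * (-(t * ν)) :=
        mul_le_mul_of_nonneg_left hx.le htν.le
      have hxle : ‖x‖^2 ≤ ν^2 := by nlinarith [norm_nonneg x]
      rw [hr2]
      nlinarith
    rw [mem_closedBall, dist_eq_norm]
    nlinarith [norm_nonneg (x - (-c)), hrpos]
  -- half-ball supersets
  set T1 : Set (EuclideanSpace ℝ (Fin m)) :=
    closedBall c r ∩ {x | (inner ℝ e c : ℝ) < inner ℝ e x} with hT1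
  set T2 : Set (EuclideanSpace ℝ (Fin m)) :=
    closedBall (-c) r ∩ {x | (inner ℝ (-e) (-c) : ℝ) < inner ℝ (-e) x} with hT2
  have hincl : S ∩ B ⊆ T1 ∪ T2 := by
    intro x hx
    have hxS : t * ν < |(inner ℝ e x : ℝ)| := hx.1
    rcases lt_abs.1 hxS with hpos | hneg
    · left
      refine ⟨hcap x hx hpos, ?_⟩
      rw [Set.mem_setOf_eq, hec]
      exact hpos
    · right
      have hlt : (inner ℝ e x : ℝ) < -(t * ν) := by linarith
      refine ⟨hcapneg x hx hlt, ?_⟩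
      rw [Set.mem_setOf_eq, inner_neg_neg, inner_neg_left, hec]
      linarith
  -- volume bounds
  have hvol1 : volume T1 * 2 ≤ volume (closedBall (0 : EuclideanSpace ℝ (Fin m)) r) := by
    calc volume T1 * 2 ≤ volume (closedBall c r) := halfball_le' c e r
      _ = volume (closedBall (0 : EuclideanSpace ℝ (Fin m)) r) :=
          Measure.addHaar_closedBall_center volume c r
  have hvol2 : volume T2 * 2 ≤ volume (closedBall (0 : EuclideanSpace ℝ (Fin m)) r) := by
    calc volume T2 * 2 ≤ volume (closedBall (-c) r) := halfball_le' (-c) (-e) r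
      _ = volume (closedBall (0 : EuclideanSpace ℝ (Fin m)) r) :=
          Measure.addHaar_closedBall_center volume (-c) r
  have hSB : volume (S ∩ B) ≤ volume (closedBall (0 : EuclideanSpace ℝ (Fin m)) r) := by
    have h2 : volume (S ∩ B) * 2
        ≤ volume (closedBall (0 : EuclideanSpace ℝ (Fin m)) r) * 2 := by
      calc volume (S ∩ B) * 2 ≤ volume (T1 ∪ T2) * 2 := by
            exact mul_le_mul_left (measure_mono hincl) 2
        _ ≤ (volume T1 + volume T2) * 2 := mul_le_mul_left (measure_union_le T1 T2) 2
        _ = volume T1 * 2 + volume T2 * 2 := by ring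
        _ ≤ volume (closedBall (0 : EuclideanSpace ℝ (Fin m)) r)
            + volume (closedBall (0 : EuclideanSpace ℝ (Fin m)) r) := add_le_add hvol1 hvol2
        _ = volume (closedBall (0 : EuclideanSpace ℝ (Fin m)) r) * 2 := by ring
    exact (ENNReal.mul_le_mul_iff_left (by norm_num) (by norm_num)).mp h2
  -- express ball volumes
  set K : ENNReal := volume (ball (0 : EuclideanSpace ℝ (Fin m)) 1) with hK
  have hKpos : K ≠ 0 := (measure_ball_pos volume 0 one_pos).ne'
  have hKtop : K ≠ ⊤ := measure_ball_lt_top.ne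
  have hrvol : volume (closedBall (0 : EuclideanSpace ℝ (Fin m)) r)
      = ENNReal.ofReal (r ^ m) * K := by
    rw [Measure.addHaar_closedBall volume 0 hrpos.le, finrank_euclideanSpace_fin]
  have hBvol : volume B = ENNReal.ofReal (ν ^ m) * K := by
    rw [hB, Measure.addHaar_closedBall volume 0 hν.le, finrank_euclideanSpace_fin]
  have hν0 : ENNReal.ofReal (ν ^ m) ≠ 0 :=
    (ENNReal.ofReal_pos.2 (by positivity)).ne'
  have hνtop : ENNReal.ofReal (ν ^ m) ≠ ⊤ := ENNReal.ofReal_ne_top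
  -- main computation
  have hgoal : ((volume B)⁻¹ • volume.restrict B) S
      ≤ ENNReal.ofReal ((Real.sqrt (1 - t^2))^m) := by
    rw [Measure.smul_apply, smul_eq_mul, Measure.restrict_apply hSmeas]
    calc (volume B)⁻¹ * volume (S ∩ B)
        ≤ (volume B)⁻¹ * volume (closedBall (0 : EuclideanSpace ℝ (Fin m)) r) :=
          mul_le_mul_right hSB _
      _ = (ENNReal.ofReal (ν ^ m) * K)⁻¹ * (ENNReal.ofReal (r ^ m) * K) := by
          rw [hBvol, hrvol]
      _ = ENNReal.ofReal (r ^ m) / ENNReal.ofReal (ν ^ m) := by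
          rw [ENNReal.mul_inv (Or.inl hν0) (Or.inl hνtop)]
          rw [ENNReal.div_eq_inv_mul]
          rw [mul_comm (ENNReal.ofReal (r ^ m)) K]
          rw [← mul_assoc, mul_assoc _ K⁻¹ _,
            ENNReal.inv_mul_cancel hKpos hKtop, mul_one]
      _ = ENNReal.ofReal (r ^ m / ν ^ m) := (ENNReal.ofReal_div_of_pos (by positivity)).symm
      _ = ENNReal.ofReal ((Real.sqrt (1 - t^2))^m) := by
          congr 1
          rw [hr, mul_pow, mul_comm, mul_div_assoc, div_self (by positivity : (ν:ℝ)^m ≠ 0),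
            mul_one]
  refine hgoal.trans (ENNReal.ofReal_le_ofReal ?_)
  exact sqrt_pow_bound' m hm t ht0 ht1
end

section
/- Let ℓ be a Bregman loss ℓ(z, w) = F(w) − F(z) − ⟨∇F(z), w − z⟩ with F differentiable, μ a probability measure on ℝ^d with the needed integrability, and gen(s, w) = E_{Z∼μ}[ℓ(Z, w)] − (1/n)Σ_j ℓ(z_j, w). Let S_i = (Z_{i,1},...,Z_{i,n}) ∼ μ^⊗n, let W_1, ..., W_K be ℝ^d-valued random variables such that W_j is independent of S_i for every j ≠ i and all relevant expectations are finite, and set W̄ = (W_1 + ... + W_K)/K. Then E[gen(S_i, W̄)] = (1/K) · E[gen(S_i, W_i)]. -/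
open MeasureTheory

/-- The Bregman loss associated with a differentiable function `F`. -/
noncomputable def bregmanLoss {d : ℕ} (F : EuclideanSpace ℝ (Fin d) → ℝ)
    (z v : EuclideanSpace ℝ (Fin d)) : ℝ :=
  F v - F z - inner ℝ (gradient F z) (v - z)

/-- The generalization error of hypothesis `w` on the dataset `s` for loss `ℓ`
under data distribution `μ`. -/
noncomputable def genErr {Z W : Type*} [MeasurableSpace Z] (μ : Measure Z)
    (ℓ : Z → W → ℝ) {n : ℕ} (s : Fin n → Z) (w : W) : ℝ :=
  (∫ z, ℓ z w ∂μ) - (1 / n) * ∑ j, ℓ (s j) w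

namespace BregAux

variable {d n : ℕ} (F : EuclideanSpace ℝ (Fin d) → ℝ)
  (μ : Measure (EuclideanSpace ℝ (Fin d)))

/-- linear coefficient of `genErr` as a function of `w` -/
noncomputable def gvec (s : Fin n → EuclideanSpace ℝ (Fin d)) : EuclideanSpace ℝ (Fin d) :=
  (n : ℝ)⁻¹ • ∑ j, gradient F (s j) - ∫ z, gradient F z ∂μ

/-- constant part of `genErr` as a function of `w` -/
noncomputable def cconst (s : Fin n → EuclideanSpace ℝ (Fin d)) : ℝ :=
  ((n : ℝ)⁻¹ * ∑ j, F (s j) - ∫ z, F z ∂μ)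
    + (∫ z, (inner ℝ (gradient F z) z : ℝ) ∂μ
        - (n : ℝ)⁻¹ * ∑ j, (inner ℝ (gradient F (s j)) (s j) : ℝ))

lemma genErr_eq [IsProbabilityMeasure μ] (hn : 0 < n)
    (hF1 : Integrable F μ)
    (hF2 : Integrable (fun z => gradient F z) μ)
    (hF3 : Integrable (fun z => (inner ℝ (gradient F z) z : ℝ)) μ)
    (s : Fin n → EuclideanSpace ℝ (Fin d)) (w : EuclideanSpace ℝ (Fin d)) :
    genErr μ (bregmanLoss F) s w = (inner ℝ (gvec F μ s) w : ℝ) + cconst F μ s := by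
  have h1 : Integrable (fun z => (inner ℝ (gradient F z) w : ℝ)) μ := hF2.inner_const w
  have hiw : ∫ z, (inner ℝ (gradient F z) w : ℝ) ∂μ
      = (inner ℝ (∫ z, gradient F z ∂μ) w : ℝ) := by
    rw [real_inner_comm, ← integral_inner hF2 w]
    exact integral_congr_ae (Filter.Eventually.of_forall fun z => real_inner_comm _ _)
  have hint : ∫ z, bregmanLoss F z w ∂μ
      = F w - ∫ z, F z ∂μ - (inner ℝ (∫ z, gradient F z ∂μ) w : ℝ)
        + ∫ z, (inner ℝ (gradient F z) z : ℝ) ∂μ := by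
    simp only [bregmanLoss, inner_sub_right]
    have hA : Integrable (fun z => F w - F z) μ := (integrable_const _).sub hF1
    have hB : Integrable (fun z => (inner ℝ (gradient F z) w : ℝ) - inner ℝ (gradient F z) z) μ :=
      h1.sub hF3
    rw [integral_sub hA hB, integral_sub (integrable_const _) hF1, integral_sub h1 hF3,
      integral_const, hiw]
    simp [measure_univ]
    ring
  have hsum : ∑ j, bregmanLoss F (s j) w
      = (n : ℝ) * F w - ∑ j, F (s j)
        - ((∑ j, (inner ℝ (gradient F (s j)) w : ℝ)) - ∑ j, (inner ℝ (gradient F (s j)) (s j) : ℝ)) := by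
    simp only [bregmanLoss, inner_sub_right, Finset.sum_sub_distrib, Finset.sum_const,
      Finset.card_univ, Fintype.card_fin, nsmul_eq_mul]
  have hgw : (inner ℝ (gvec F μ s) w : ℝ)
      = (n : ℝ)⁻¹ * ∑ j, (inner ℝ (gradient F (s j)) w : ℝ)
        - (inner ℝ (∫ z, gradient F z ∂μ) w : ℝ) := by
    have hsa : ∀ x : Fin d, (∑ j, gradient F (s j)) x = ∑ j, gradient F (s j) x :=
      fun x => by rw [WithLp.ofLp_sum, Finset.sum_apply]
    simp only [gvec, inner_sub_left, real_inner_smul_left, sum_inner, PiLp.inner_apply, hsa,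
      RCLike.inner_apply, conj_trivial, Finset.sum_apply, PiLp.smul_apply, smul_eq_mul,
      Finset.mul_sum, Finset.sum_mul]
    rw [Finset.sum_comm]
    exact congrArg (· - _) (Finset.sum_congr rfl fun x _ => Finset.sum_congr rfl fun j _ => by ring)
  have hnz : (n : ℝ) ≠ 0 := Nat.cast_ne_zero.mpr hn.ne'
  rw [genErr, hint, hsum, hgw, cconst]
  field_simp
  ring

end BregAux

namespace BregAux

variable {d n : ℕ} {F : EuclideanSpace ℝ (Fin d) → ℝ}
  {μ : Measure (EuclideanSpace ℝ (Fin d))}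

lemma measurePreserving_eval [IsProbabilityMeasure μ] (j : Fin n) :
    MeasurePreserving (fun s : Fin n → EuclideanSpace ℝ (Fin d) => s j)
      (Measure.pi fun _ => μ) μ := by
  refine ⟨measurable_pi_apply j, ?_⟩
  ext A hA
  rw [Measure.map_apply (measurable_pi_apply j) hA,
    show (fun s : Fin n → _ => s j) ⁻¹' A
        = Set.pi Set.univ (Function.update (fun _ => Set.univ) j A) from Set.eval_preimage,
    Measure.pi_pi]
  rw [Finset.prod_eq_single j (fun b _ hb => by simp [Function.update_of_ne hb]) (by simp)]
  simp

lemma measurable_gradient (F : EuclideanSpace ℝ (Fin d) → ℝ) :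
    Measurable (gradient F) :=
  ((InnerProductSpace.toDual ℝ _).symm.continuous.measurable).comp (measurable_fderiv ℝ F)

lemma measurable_gvec (F : EuclideanSpace ℝ (Fin d) → ℝ)
    (μ : Measure (EuclideanSpace ℝ (Fin d))) :
    Measurable (gvec (n := n) F μ) := by
  apply Measurable.sub _ measurable_const
  exact ((Finset.univ : Finset (Fin n)).measurable_sum fun j _ =>
    (measurable_gradient F).comp (measurable_pi_apply j)).const_smul ((n : ℝ)⁻¹)

end BregAux

namespace BregAux

variable {d n : ℕ} {F : EuclideanSpace ℝ (Fin d) → ℝ}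
  {μ : Measure (EuclideanSpace ℝ (Fin d))}

lemma comp_eval_integrable [IsProbabilityMeasure μ] {β : Type*} [NormedAddCommGroup β]
    {f : EuclideanSpace ℝ (Fin d) → β} (hf : Integrable f μ) (j : Fin n) :
    Integrable (fun s : Fin n → EuclideanSpace ℝ (Fin d) => f (s j))
      (Measure.pi fun _ => μ) :=
  ((measurePreserving_eval j).integrable_comp hf.aestronglyMeasurable).mpr hf

lemma integral_comp_eval [IsProbabilityMeasure μ] {β : Type*} [NormedAddCommGroup β]
    [NormedSpace ℝ β] {f : EuclideanSpace ℝ (Fin d) → β}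
    (hf : AEStronglyMeasurable f μ) (j : Fin n) :
    ∫ s, f (s j) ∂(Measure.pi fun _ : Fin n => μ) = ∫ z, f z ∂μ := by
  have h := measurePreserving_eval (μ := μ) (n := n) j
  have hf' : AEStronglyMeasurable f ((Measure.pi fun _ : Fin n => μ).map
      (fun s : Fin n → EuclideanSpace ℝ (Fin d) => s j)) := h.map_eq.symm ▸ hf
  conv_rhs => rw [← h.map_eq]
  rw [integral_map (measurable_pi_apply j).aemeasurable hf']

lemma cconst_int [IsProbabilityMeasure μ] (hF1 : Integrable F μ)
    (hF3 : Integrable (fun z => (inner ℝ (gradient F z) z : ℝ)) μ) :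
    Integrable (cconst (n := n) F μ) (Measure.pi fun _ => μ) := by
  have hA : Integrable (fun s : Fin n → EuclideanSpace ℝ (Fin d) =>
      (n : ℝ)⁻¹ * ∑ j, F (s j)) (Measure.pi fun _ => μ) :=
    (integrable_finset_sum _ fun j _ => comp_eval_integrable hF1 j).const_mul _
  have hB : Integrable (fun s : Fin n → EuclideanSpace ℝ (Fin d) =>
      (n : ℝ)⁻¹ * ∑ j, (inner ℝ (gradient F (s j)) (s j) : ℝ)) (Measure.pi fun _ => μ) :=
    (integrable_finset_sum _ fun j _ => comp_eval_integrable hF3 j).const_mul _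
  show Integrable (fun s : Fin n → EuclideanSpace ℝ (Fin d) =>
      ((n : ℝ)⁻¹ * ∑ j, F (s j) - ∫ z, F z ∂μ)
        + (∫ z, (inner ℝ (gradient F z) z : ℝ) ∂μ
            - (n : ℝ)⁻¹ * ∑ j, (inner ℝ (gradient F (s j)) (s j) : ℝ))) _
  exact (hA.sub (integrable_const _)).add ((integrable_const _).sub hB)

lemma cconst_integral_zero [IsProbabilityMeasure μ] (hn : 0 < n) (hF1 : Integrable F μ)
    (hF3 : Integrable (fun z => (inner ℝ (gradient F z) z : ℝ)) μ) :
    ∫ s, cconst (n := n) F μ s ∂(Measure.pi fun _ => μ) = 0 := by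
  have hnz : (n : ℝ) ≠ 0 := Nat.cast_ne_zero.mpr hn.ne'
  have hA : Integrable (fun s : Fin n → EuclideanSpace ℝ (Fin d) =>
      (n : ℝ)⁻¹ * ∑ j, F (s j)) (Measure.pi fun _ => μ) :=
    (integrable_finset_sum _ fun j _ => comp_eval_integrable hF1 j).const_mul _
  have hB : Integrable (fun s : Fin n → EuclideanSpace ℝ (Fin d) =>
      (n : ℝ)⁻¹ * ∑ j, (inner ℝ (gradient F (s j)) (s j) : ℝ)) (Measure.pi fun _ => μ) :=
    (integrable_finset_sum _ fun j _ => comp_eval_integrable hF3 j).const_mul _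
  have hA' : Integrable (fun s : Fin n → EuclideanSpace ℝ (Fin d) =>
      (n : ℝ)⁻¹ * ∑ j, F (s j) - ∫ z, F z ∂μ) (Measure.pi fun _ => μ) :=
    hA.sub (integrable_const _)
  have hB' : Integrable (fun s : Fin n → EuclideanSpace ℝ (Fin d) =>
      (∫ z, (inner ℝ (gradient F z) z : ℝ) ∂μ)
        - (n : ℝ)⁻¹ * ∑ j, (inner ℝ (gradient F (s j)) (s j) : ℝ)) (Measure.pi fun _ => μ) :=
    (integrable_const _).sub hB
  unfold cconst
  rw [integral_add hA' hB',
    integral_sub hA (integrable_const (∫ z, F z ∂μ)),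
    integral_sub (integrable_const (∫ z, (inner ℝ (gradient F z) z : ℝ) ∂μ)) hB,
    integral_const_mul, integral_const_mul,
    integral_finset_sum _ (fun j _ => comp_eval_integrable hF1 j),
    integral_finset_sum _ (fun j _ => comp_eval_integrable hF3 j)]
  simp only [integral_comp_eval hF1.aestronglyMeasurable,
    integral_comp_eval hF3.aestronglyMeasurable, Finset.sum_const, Finset.card_univ,
    Fintype.card_fin, nsmul_eq_mul, integral_const, measure_univ, ENNReal.toReal_one, one_smul,
    smul_eq_mul, probReal_univ]
  field_simp
  ring

lemma gvec_int [IsProbabilityMeasure μ]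
    (hF2 : Integrable (fun z => gradient F z) μ) :
    Integrable (gvec (n := n) F μ) (Measure.pi fun _ => μ) := by
  have h1 : Integrable (fun s : Fin n → EuclideanSpace ℝ (Fin d) =>
      (n : ℝ)⁻¹ • ∑ j, gradient F (s j)) (Measure.pi fun _ => μ) :=
    (integrable_finset_sum _ fun j _ => comp_eval_integrable hF2 j).fun_smul _
  have := h1.sub (integrable_const (∫ z, gradient F z ∂μ))
  exact this

lemma gvec_integral_zero [IsProbabilityMeasure μ] (hn : 0 < n)
    (hF2 : Integrable (fun z => gradient F z) μ) :
    ∫ s, gvec (n := n) F μ s ∂(Measure.pi fun _ => μ) = 0 := by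
  have hnz : (n : ℝ) ≠ 0 := Nat.cast_ne_zero.mpr hn.ne'
  have h1 : Integrable (fun s : Fin n → EuclideanSpace ℝ (Fin d) =>
      (n : ℝ)⁻¹ • ∑ j, gradient F (s j)) (Measure.pi fun _ => μ) :=
    (integrable_finset_sum _ fun j _ => comp_eval_integrable hF2 j).fun_smul _
  unfold gvec
  rw [integral_sub h1 (integrable_const (∫ z, gradient F z ∂μ)),
    integral_smul, integral_finset_sum _ (fun j _ => comp_eval_integrable hF2 j)]
  simp only [integral_comp_eval hF2.aestronglyMeasurable, Finset.sum_const, Finset.card_univ,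
    Fintype.card_fin, integral_const, measure_univ, ENNReal.toReal_one, one_smul, probReal_univ]
  rw [← Nat.cast_smul_eq_nsmul ℝ, smul_smul, inv_mul_cancel₀ hnz, one_smul, sub_self]

end BregAux


open ProbabilityTheory

/-- For a Bregman loss, if `S_i ∼ μ^⊗n` and `W_j` is independent of `S_i` for
every `j ≠ i`, then the expected generalization error of the aggregated model
`W̄ = (W_1 + ⋯ + W_K)/K` on `S_i` equals `(1/K)` times that of `W_i`. -/
theorem bregman_distributed_gen {Ω : Type*} [MeasurableSpace Ω]
    (P : Measure Ω) [IsProbabilityMeasure P]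
    {d n K : ℕ} (hn : 0 < n) (hK : 0 < K) (i : Fin K)
    (F : EuclideanSpace ℝ (Fin d) → ℝ) (hF : Differentiable ℝ F)
    (μ : Measure (EuclideanSpace ℝ (Fin d))) [IsProbabilityMeasure μ]
    (hF1 : Integrable F μ)
    (hF2 : Integrable (fun z => gradient F z) μ)
    (hF3 : Integrable (fun z => (inner ℝ (gradient F z) z : ℝ)) μ)
    (S : Ω → Fin n → EuclideanSpace ℝ (Fin d)) (hS : Measurable S)
    (hSlaw : P.map S = Measure.pi fun _ => μ)
    (W : Fin K → Ω → EuclideanSpace ℝ (Fin d))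
    (hW : ∀ j, Measurable (W j))
    (hWint : ∀ j, Integrable (W j) P)
    (hindep : ∀ j, j ≠ i → ProbabilityTheory.IndepFun (W j) S P)
    (hgenint : Integrable
      (fun ω => genErr μ (bregmanLoss F) (S ω) ((K : ℝ)⁻¹ • ∑ j, W j ω)) P)
    (hgenint' : ∀ j,
      Integrable (fun ω => genErr μ (bregmanLoss F) (S ω) (W j ω)) P) :
    ∫ ω, genErr μ (bregmanLoss F) (S ω) ((K : ℝ)⁻¹ • ∑ j, W j ω) ∂P
      = (1 / K) * ∫ ω, genErr μ (bregmanLoss F) (S ω) (W i ω) ∂P := by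
  classical
  have hKz : (K : ℝ) ≠ 0 := Nat.cast_ne_zero.mpr hK.ne'
  have hdec : ∀ s w, genErr μ (bregmanLoss F) s w
      = (inner ℝ (BregAux.gvec F μ s) w : ℝ) + BregAux.cconst F μ s :=
    fun s w => BregAux.genErr_eq F μ hn hF1 hF2 hF3 s w
  -- pointwise averaging identity
  have havg : ∀ ω, genErr μ (bregmanLoss F) (S ω) ((K : ℝ)⁻¹ • ∑ j, W j ω)
      = (K : ℝ)⁻¹ * ∑ j, genErr μ (bregmanLoss F) (S ω) (W j ω) := by
    intro ω
    simp only [hdec]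
    rw [real_inner_smul_right, inner_sum, Finset.sum_add_distrib, Finset.sum_const,
      Finset.card_univ, Fintype.card_fin, nsmul_eq_mul, mul_add, ← mul_assoc,
      inv_mul_cancel₀ hKz, one_mul]
  -- transfer of cconst ∘ S
  have hcM_int := BregAux.cconst_int (n := n) hF1 hF3
  have hcmap : AEStronglyMeasurable (BregAux.cconst F μ) (P.map S) := by
    rw [hSlaw]; exact hcM_int.aestronglyMeasurable
  have hcS_int : Integrable (fun ω => BregAux.cconst F μ (S ω)) P := by
    have h := hcM_int
    rw [← hSlaw] at h
    exact (integrable_map_measure hcmap hS.aemeasurable).mp h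
  have hcS_zero : ∫ ω, BregAux.cconst F μ (S ω) ∂P = 0 := by
    calc ∫ ω, BregAux.cconst F μ (S ω) ∂P = ∫ s, BregAux.cconst F μ s ∂(P.map S) :=
          (integral_map hS.aemeasurable hcmap).symm
      _ = 0 := by rw [hSlaw]; exact BregAux.cconst_integral_zero hn hF1 hF3
  -- transfer of gvec ∘ S
  have hgM_int := BregAux.gvec_int (n := n) hF2
  have hgmap : AEStronglyMeasurable (BregAux.gvec F μ) (P.map S) := by
    rw [hSlaw]; exact hgM_int.aestronglyMeasurable
  have hgS_int : Integrable (fun ω => BregAux.gvec F μ (S ω)) P := by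
    have h := hgM_int
    rw [← hSlaw] at h
    exact (integrable_map_measure hgmap hS.aemeasurable).mp h
  have hgS_zero : ∫ ω, BregAux.gvec F μ (S ω) ∂P = 0 := by
    calc ∫ ω, BregAux.gvec F μ (S ω) ∂P = ∫ s, BregAux.gvec F μ s ∂(P.map S) :=
          (integral_map hS.aemeasurable hgmap).symm
      _ = 0 := by rw [hSlaw]; exact BregAux.gvec_integral_zero hn hF2
  -- vanishing of the cross terms
  have hzero : ∀ j, j ≠ i → ∫ ω, genErr μ (bregmanLoss F) (S ω) (W j ω) ∂P = 0 := by
    intro j hj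
    have hindepS : IndepFun S (W j) P := (hindep j hj).symm
    have hXint : ∀ k : Fin d, Integrable (fun ω => BregAux.gvec F μ (S ω) k) P := fun k => by
      simpa using (EuclideanSpace.proj (𝕜 := ℝ) k).integrable_comp hgS_int
    have hXzero : ∀ k : Fin d, ∫ ω, BregAux.gvec F μ (S ω) k ∂P = 0 := by
      intro k
      have := (EuclideanSpace.proj (𝕜 := ℝ) k).integral_comp_comm hgS_int
      simpa [hgS_zero] using this
    have hYint : ∀ k : Fin d, Integrable (fun ω => W j ω k) P := fun k => by
      simpa using (EuclideanSpace.proj (𝕜 := ℝ) k).integrable_comp (hWint j)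
    have hik : ∀ k : Fin d,
        IndepFun (fun ω => BregAux.gvec F μ (S ω) k) (fun ω => W j ω k) P := fun k =>
      hindepS.comp ((EuclideanSpace.proj (𝕜 := ℝ) k).continuous.measurable.comp (BregAux.measurable_gvec F μ))
        (EuclideanSpace.proj (𝕜 := ℝ) k).continuous.measurable
    have hprod : ∀ k : Fin d,
        Integrable (fun ω => BregAux.gvec F μ (S ω) k * W j ω k) P := fun k =>
      (hik k).integrable_mul (hXint k) (hYint k)
    have hinner_eq : ∀ ω, (inner ℝ (BregAux.gvec F μ (S ω)) (W j ω) : ℝ)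
        = ∑ k, BregAux.gvec F μ (S ω) k * W j ω k := fun ω => by
      simp [PiLp.inner_apply, RCLike.inner_apply, conj_trivial]
      exact Finset.sum_congr rfl fun _ _ => mul_comm _ _
    have hinner_int : Integrable
        (fun ω => (inner ℝ (BregAux.gvec F μ (S ω)) (W j ω) : ℝ)) P := by
      rw [show (fun ω => (inner ℝ (BregAux.gvec F μ (S ω)) (W j ω) : ℝ))
          = fun ω => ∑ k, BregAux.gvec F μ (S ω) k * W j ω k from funext hinner_eq]
      exact integrable_finset_sum _ fun k _ => hprod k
    have hinner_zero :
        ∫ ω, (inner ℝ (BregAux.gvec F μ (S ω)) (W j ω) : ℝ) ∂P = 0 := by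
      simp_rw [hinner_eq]
      rw [integral_finset_sum _ fun k _ => hprod k]
      refine Finset.sum_eq_zero fun k _ => ?_
      have h := (hik k).integral_mul_eq_mul_integral (hXint k).aestronglyMeasurable (hYint k).aestronglyMeasurable
      simpa [Pi.mul_apply, hXzero k] using h
    calc ∫ ω, genErr μ (bregmanLoss F) (S ω) (W j ω) ∂P
        = ∫ ω, ((inner ℝ (BregAux.gvec F μ (S ω)) (W j ω) : ℝ)
            + BregAux.cconst F μ (S ω)) ∂P := by simp_rw [hdec]
      _ = 0 := by rw [integral_add hinner_int hcS_int, hinner_zero, hcS_zero, add_zero]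
  -- putting it all together
  calc ∫ ω, genErr μ (bregmanLoss F) (S ω) ((K : ℝ)⁻¹ • ∑ j, W j ω) ∂P
      = ∫ ω, (K : ℝ)⁻¹ * ∑ j, genErr μ (bregmanLoss F) (S ω) (W j ω) ∂P := by
        simp_rw [havg]
    _ = (K : ℝ)⁻¹ * ∑ j, ∫ ω, genErr μ (bregmanLoss F) (S ω) (W j ω) ∂P := by
        rw [integral_const_mul, integral_finset_sum _ fun j _ => hgenint' j]
    _ = (K : ℝ)⁻¹ * ∫ ω, genErr μ (bregmanLoss F) (S ω) (W i ω) ∂P := by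
        rw [Finset.sum_eq_single_of_mem i (Finset.mem_univ i) fun j _ hj => hzero j hj]
    _ = (1 / K) * ∫ ω, genErr μ (bregmanLoss F) (S ω) (W i ω) ∂P := by rw [one_div]
end

section
/- Let W be an ℝ^m-valued random variable with ‖W‖ ≤ c almost surely for some c > 0, let V be uniformly distributed on the closed Euclidean ball of radius ν > 0 in ℝ^m, independent of W, and set Ŵ = W + V. Then I(W; Ŵ) ≤ m · log((c + ν)/ν). -/
open MeasureTheory
open scoped ENNReal Classical

/-- The Kullback–Leibler divergence between two measures, with value `∞` when
`μ` is not absolutely continuous w.r.t. `ν` or the log-likelihood ratio is not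
integrable. -/
noncomputable def klDiv {α : Type*} [MeasurableSpace α] (μ ν : Measure α) : ℝ≥0∞ :=
  if μ ≪ ν ∧ Integrable (llr μ ν) μ then ENNReal.ofReal (∫ x, llr μ ν x ∂μ) else ∞

/-- The mutual information between two random variables: KL divergence of the
joint law from the product of the marginal laws. -/
noncomputable def mutualInfo {Ω α β : Type*}
    [MeasurableSpace Ω] [MeasurableSpace α] [MeasurableSpace β]
    (P : Measure Ω) (X : Ω → α) (Y : Ω → β) : ℝ≥0∞ :=
  klDiv (P.map fun ω => (X ω, Y ω)) ((P.map X).prod (P.map Y))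

private lemma aux_sub_one_le_mul_log {t : ℝ} (ht : 0 ≤ t) : t - 1 ≤ t * Real.log t := by
  rcases eq_or_lt_of_le ht with h | h
  · simp [← h]
  · have h1 : Real.log t⁻¹ ≤ t⁻¹ - 1 := Real.log_le_sub_one_of_pos (inv_pos.2 h)
    rw [Real.log_inv] at h1
    have h2 := mul_le_mul_of_nonneg_left h1 ht
    rw [mul_sub, mul_inv_cancel₀ h.ne'] at h2
    nlinarith

private lemma aux_mul_abs_log_le {K t : ℝ} (hK : 1 ≤ K) (ht : 0 ≤ t) (htK : t ≤ K) :
    t * |Real.log t| ≤ 1 + K * |Real.log K| := by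
  have hKlog : 0 ≤ K * |Real.log K| := by positivity
  rcases le_or_gt t 1 with h1 | h1
  · rcases eq_or_lt_of_le ht with h0 | h0
    · simp [← h0]; positivity
    · have h := Real.abs_log_mul_self_lt t h0 h1
      have : t * |Real.log t| = |Real.log t * t| := by
        rw [abs_mul, abs_of_nonneg ht, mul_comm]
      linarith [this ▸ h]
  · have hlt : |Real.log t| = Real.log t := abs_of_nonneg (Real.log_nonneg h1.le)
    have hlK : |Real.log K| = Real.log K := abs_of_nonneg (Real.log_nonneg hK)
    have : t * Real.log t ≤ K * Real.log K :=
      mul_le_mul htK (Real.log_le_log (by linarith) htK) (Real.log_nonneg h1.le) (by linarith)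
    rw [hlt, hlK]; linarith

private lemma prod_withDensity_snd {α β : Type*} [MeasurableSpace α] [MeasurableSpace β]
    (μ : Measure α) (Q : Measure β) [SigmaFinite μ] [SigmaFinite Q]
    {g : β → ℝ≥0∞} (hg : Measurable g) [SFinite (Q.withDensity g)] :
    μ.prod (Q.withDensity g) = (μ.prod Q).withDensity (fun p => g p.2) := by
  ext s hs
  rw [Measure.prod_apply hs, withDensity_apply _ hs, ← lintegral_indicator hs,
    MeasureTheory.lintegral_prod (s.indicator fun p => g p.2) ((hg.comp measurable_snd).indicator hs).aemeasurable]
  refine lintegral_congr fun x => ?_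
  have : ∀ y, s.indicator (fun p : α × β => g p.2) (x, y)
      = (Prod.mk x ⁻¹' s).indicator g y := by
    intro y
    simp [Set.indicator_apply, Set.mem_preimage]
  simp_rw [this]
  rw [lintegral_indicator (measurable_prodMk_left hs) _, withDensity_apply _ (measurable_prodMk_left hs)]

private lemma integrable_log_toReal_withDensity {α : Type*} [MeasurableSpace α]
    (ρ : Measure α) [IsFiniteMeasure ρ] {d : α → ℝ≥0∞} (hd : Measurable d)
    {K : ℝ≥0∞} (hKt : K ≠ ∞) (hK1 : 1 ≤ K.toReal) (hdK : d ≤ᵐ[ρ] fun _ => K) :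
    Integrable (fun x => Real.log (d x).toReal) (ρ.withDensity d) := by
  have hm : Measurable fun x => Real.log (d x).toReal :=
    Real.measurable_log.comp hd.ennreal_toReal
  refine ⟨hm.aestronglyMeasurable, ?_⟩
  rw [HasFiniteIntegral, lintegral_withDensity_eq_lintegral_mul ρ hd hm.enorm]
  calc ∫⁻ x, d x * ‖Real.log (d x).toReal‖ₑ ∂ρ
      ≤ ∫⁻ _, ENNReal.ofReal (1 + K.toReal * |Real.log K.toReal|) ∂ρ := by
        refine lintegral_mono_ae ?_
        filter_upwards [hdK] with x hx
        have hxt : d x ≠ ∞ := (lt_of_le_of_lt hx (lt_top_iff_ne_top.2 hKt)).ne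
        rw [Real.enorm_eq_ofReal_abs]
        nth_rewrite 1 [← ENNReal.ofReal_toReal hxt]
        rw [← ENNReal.ofReal_mul ENNReal.toReal_nonneg]
        exact ENNReal.ofReal_le_ofReal
          (aux_mul_abs_log_le hK1 ENNReal.toReal_nonneg (ENNReal.toReal_mono hKt hx))
    _ < ∞ := by rw [lintegral_const]; exact ENNReal.mul_lt_top ENNReal.ofReal_lt_top (measure_lt_top _ _)

/-- Rate bound for compression by uniform-ball dithering: if `‖W‖ ≤ c` a.s.
and `V` is uniform on the ball of radius `ν`, independent of `W`, then
`I(W; W + V) ≤ m·log((c + ν)/ν)`. -/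
theorem mutualInfo_add_uniform_ball_le {Ω : Type*} [MeasurableSpace Ω]
    (P : Measure Ω) [IsProbabilityMeasure P]
    {m : ℕ} (W V : Ω → EuclideanSpace ℝ (Fin m))
    (hW : Measurable W) (hV : Measurable V)
    (c ν : ℝ) (hc : 0 < c) (hν : 0 < ν)
    (hbdd : ∀ᵐ ω ∂P, ‖W ω‖ ≤ c)
    (hVlaw : P.map V
      = (volume (Metric.closedBall (0 : EuclideanSpace ℝ (Fin m)) ν))⁻¹ •
          volume.restrict (Metric.closedBall (0 : EuclideanSpace ℝ (Fin m)) ν))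
    (hindep : ProbabilityTheory.IndepFun W V P) :
    mutualInfo P W (fun ω => W ω + V ω)
      ≤ ENNReal.ofReal (m * Real.log ((c + ν) / ν)) := by
  classical
  have hcν : (0:ℝ) < c + ν := by linarith
  set Y : Ω → (EuclideanSpace ℝ (Fin m)) := fun ω => W ω + V ω with hYdef
  have hY : Measurable Y := hW.add hV
  set Bν := Metric.closedBall (0 : (EuclideanSpace ℝ (Fin m))) ν with hBν
  set Bc := Metric.closedBall (0 : (EuclideanSpace ℝ (Fin m))) (c + ν) with hBc
  have hvν0 : volume Bν ≠ 0 := (Metric.measure_closedBall_pos volume _ hν).ne'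
  have hvνt : volume Bν ≠ ∞ := measure_closedBall_lt_top.ne
  have hvc0 : volume Bc ≠ 0 := (Metric.measure_closedBall_pos volume _ hcν).ne'
  have hvct : volume Bc ≠ ∞ := measure_closedBall_lt_top.ne
  set K : ℝ≥0∞ := volume Bc / volume Bν with hKdef
  have hKt : K ≠ ∞ := (ENNReal.div_lt_top hvct hvν0).ne
  have hK1 : 1 ≤ K := by
    rw [hKdef, ENNReal.le_div_iff_mul_le (Or.inl hvν0) (Or.inl hvνt), one_mul]
    exact measure_mono (Metric.closedBall_subset_closedBall (by linarith))
  have hKr1 : 1 ≤ K.toReal := by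
    simpa using ENNReal.toReal_mono hKt hK1
  set Q : Measure (EuclideanSpace ℝ (Fin m)) := (volume Bc)⁻¹ • volume.restrict Bc with hQdef
  have hQapp : ∀ s : Set (EuclideanSpace ℝ (Fin m)), MeasurableSet s → Q s = (volume Bc)⁻¹ * volume (s ∩ Bc) := by
    intro s hs
    rw [hQdef, Measure.smul_apply, smul_eq_mul, Measure.restrict_apply hs]
  haveI hQprob : IsProbabilityMeasure Q := by
    constructor
    rw [hQapp _ MeasurableSet.univ, Set.univ_inter, ENNReal.inv_mul_cancel hvc0 hvct]
  set μW := P.map W with hμW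
  set μY := P.map Y with hμY
  set μ := P.map (fun ω => (W ω, Y ω)) with hμdef
  haveI : IsProbabilityMeasure μW := Measure.isProbabilityMeasure_map hW.aemeasurable
  haveI : IsProbabilityMeasure μY := Measure.isProbabilityMeasure_map hY.aemeasurable
  haveI : IsProbabilityMeasure μ := Measure.isProbabilityMeasure_map (hW.prodMk hY).aemeasurable
  set π : Measure ((EuclideanSpace ℝ (Fin m)) × (EuclideanSpace ℝ (Fin m))) := μW.prod μY with hπdef
  set π' : Measure ((EuclideanSpace ℝ (Fin m)) × (EuclideanSpace ℝ (Fin m))) := μW.prod Q with hπ'def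
  have hsnd : μ.map Prod.snd = μY := by
    rw [hμdef, Measure.map_map measurable_snd (hW.prodMk hY)]
    rfl
  have hWc : ∀ᵐ w ∂μW, ‖w‖ ≤ c := by
    rw [hμW, ae_map_iff hW.aemeasurable (measurableSet_le measurable_norm measurable_const)]
    exact hbdd
  -- Step 1 : μ ≤ K • π'
  have hmapm : Measurable fun p : (EuclideanSpace ℝ (Fin m)) × (EuclideanSpace ℝ (Fin m)) => (p.1, p.1 + p.2) :=
    measurable_fst.prodMk (measurable_fst.add measurable_snd)
  have hjoint : P.map (fun ω => (W ω, V ω)) = μW.prod (P.map V) :=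
    (ProbabilityTheory.indepFun_iff_map_prod_eq_prod_map_map hW.aemeasurable
      hV.aemeasurable).mp hindep
  have hμrepr : μ = (μW.prod (P.map V)).map (fun p => (p.1, p.1 + p.2)) := by
    rw [← hjoint, Measure.map_map hmapm (hW.prodMk hV)]
    rfl
  have hle : μ ≤ K • π' := by
    refine Measure.le_iff.2 fun s hs => ?_
    rw [hμrepr, Measure.map_apply hmapm hs, Measure.prod_apply (hmapm hs),
      Measure.smul_apply, smul_eq_mul, hπ'def, Measure.prod_apply hs,
      ← lintegral_const_mul K (measurable_measure_prodMk_left hs)]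
    refine lintegral_mono_ae ?_
    filter_upwards [hWc] with w hw
    have hA : MeasurableSet (Prod.mk w ⁻¹' s) := measurable_prodMk_left hs
    have hpre : Prod.mk w ⁻¹' ((fun p : (EuclideanSpace ℝ (Fin m)) × (EuclideanSpace ℝ (Fin m)) => (p.1, p.1 + p.2)) ⁻¹' s)
        = (fun v => w + v) ⁻¹' (Prod.mk w ⁻¹' s) := rfl
    have hBall : (fun v => w + v) ⁻¹' (Metric.closedBall w ν) = Bν := by
      ext v
      simp [Metric.mem_closedBall, dist_eq_norm, hBν]
    have hmv : MeasurableSet ((fun v => w + v) ⁻¹' (Prod.mk w ⁻¹' s)) :=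
      (measurable_const_add w) hA
    rw [hpre, hVlaw, Measure.smul_apply, smul_eq_mul, Measure.restrict_apply hmv]
    have hvol : volume ((fun v => w + v) ⁻¹' (Prod.mk w ⁻¹' s) ∩ Bν)
        = volume (Prod.mk w ⁻¹' s ∩ Metric.closedBall w ν) := by
      rw [← hBall, ← Set.preimage_inter]
      exact measure_preimage_add volume w _
    rw [hvol, hQapp _ hA]
    have hsubset : Metric.closedBall w ν ⊆ Bc := by
      rw [hBc]
      refine Metric.closedBall_subset_closedBall' ?_
      have : dist w 0 = ‖w‖ := by simp
      rw [this]; linarith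
    have hmono : volume (Prod.mk w ⁻¹' s ∩ Metric.closedBall w ν)
        ≤ volume (Prod.mk w ⁻¹' s ∩ Bc) :=
      measure_mono (Set.inter_subset_inter_right _ hsubset)
    have hKQ : K * ((volume Bc)⁻¹ * volume (Prod.mk w ⁻¹' s ∩ Bc))
        = (volume Bν)⁻¹ * volume (Prod.mk w ⁻¹' s ∩ Bc) := by
      rw [hKdef, ENNReal.div_eq_inv_mul, mul_assoc, ← mul_assoc (volume Bc),
        ENNReal.mul_inv_cancel hvc0 hvct, one_mul]
    rw [hKQ]
    exact mul_le_mul_right hmono _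
  -- absolute continuity wrt π'
  have hacπ' : μ ≪ π' := by
    intro s hs
    refine le_antisymm ?_ zero_le
    calc μ s ≤ (K • π') s := Measure.le_iff'.1 hle s
      _ = K * π' s := by rw [Measure.smul_apply, smul_eq_mul]
      _ = 0 := by rw [hs, mul_zero]
  set h : (EuclideanSpace ℝ (Fin m)) × (EuclideanSpace ℝ (Fin m)) → ℝ≥0∞ := μ.rnDeriv π' with hhdef
  have hhm : Measurable h := Measure.measurable_rnDeriv μ π'
  have hμh : π'.withDensity h = μ := Measure.withDensity_rnDeriv_eq μ π' hacπ'
  have hhK : h ≤ᵐ[π'] fun _ => K := by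
    refine ae_le_of_forall_setLIntegral_le_of_sigmaFinite hhm fun s hs _ => ?_
    rw [hhdef, Measure.setLIntegral_rnDeriv hacπ' s, setLIntegral_const]
    calc μ s ≤ (K • π') s := Measure.le_iff'.1 hle s
      _ = K * π' s := by rw [Measure.smul_apply, smul_eq_mul]
  -- Step 3 : μY ≪ Q with bounded density g
  have hleY : μY ≤ K • Q := by
    refine Measure.le_iff.2 fun s hs => ?_
    have h1 : μY s = μ (Prod.snd ⁻¹' s) := by
      rw [← hsnd, Measure.map_apply measurable_snd hs]
    rw [h1, Measure.smul_apply, smul_eq_mul]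
    calc μ (Prod.snd ⁻¹' s) ≤ (K • π') (Prod.snd ⁻¹' s) := Measure.le_iff'.1 hle _
      _ = K * π' (Set.univ ×ˢ s) := by
          rw [Measure.smul_apply, smul_eq_mul, Set.univ_prod]
      _ = K * Q s := by rw [hπ'def, Measure.prod_prod, measure_univ, one_mul]
  have hacY : μY ≪ Q := by
    intro s hs
    refine le_antisymm ?_ zero_le
    calc μY s ≤ (K • Q) s := Measure.le_iff'.1 hleY s
      _ = K * Q s := by rw [Measure.smul_apply, smul_eq_mul]
      _ = 0 := by rw [hs, mul_zero]
  set g : (EuclideanSpace ℝ (Fin m)) → ℝ≥0∞ := μY.rnDeriv Q with hgdef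
  have hgm : Measurable g := Measure.measurable_rnDeriv μY Q
  have hQg : Q.withDensity g = μY := Measure.withDensity_rnDeriv_eq μY Q hacY
  have hgK : g ≤ᵐ[Q] fun _ => K := by
    refine ae_le_of_forall_setLIntegral_le_of_sigmaFinite hgm fun s hs _ => ?_
    rw [hgdef, Measure.setLIntegral_rnDeriv hacY s, setLIntegral_const]
    calc μY s ≤ (K • Q) s := Measure.le_iff'.1 hleY s
      _ = K * Q s := by rw [Measure.smul_apply, smul_eq_mul]
  -- Step 4 : μ-a.e. g ∘ snd ≠ 0
  have hZm : MeasurableSet {y : (EuclideanSpace ℝ (Fin m)) | g y = 0} := hgm (measurableSet_singleton 0)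
  have hμg0 : μ {x : (EuclideanSpace ℝ (Fin m)) × (EuclideanSpace ℝ (Fin m)) | g x.2 = 0} = 0 := by
    have h1 : {x : (EuclideanSpace ℝ (Fin m)) × (EuclideanSpace ℝ (Fin m)) | g x.2 = 0} = Prod.snd ⁻¹' {y : (EuclideanSpace ℝ (Fin m)) | g y = 0} := rfl
    rw [h1, ← Measure.map_apply measurable_snd hZm, hsnd,
      ← Measure.setLIntegral_rnDeriv hacY, ← hgdef]
    rw [setLIntegral_congr_fun hZm (fun y hy => hy)]
    simp
  -- Step 5 : π as withDensity over π'
  haveI : IsFiniteMeasure (Q.withDensity g) := by rw [hQg]; infer_instance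
  have hπ : π = π'.withDensity (fun p => g p.2) := by
    rw [hπdef, ← hQg, hπ'def]
    exact prod_withDensity_snd μW Q hgm
  -- Step 6 : μ = π.withDensity f
  set f : (EuclideanSpace ℝ (Fin m)) × (EuclideanSpace ℝ (Fin m)) → ℝ≥0∞ := fun p => h p * (g p.2)⁻¹ with hfdef
  have hfm : Measurable f := hhm.mul ((hgm.comp measurable_snd).inv)
  have hgKπ' : ∀ᵐ p ∂π', g p.2 ≤ K := by
    have hBad : MeasurableSet {y : (EuclideanSpace ℝ (Fin m)) | ¬ g y ≤ K} := (hgm measurableSet_Iic).compl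
    rw [ae_iff]
    have h1 : {p : (EuclideanSpace ℝ (Fin m)) × (EuclideanSpace ℝ (Fin m)) | ¬ g p.2 ≤ K} = Prod.snd ⁻¹' {y : (EuclideanSpace ℝ (Fin m)) | ¬ g y ≤ K} := rfl
    rw [h1, hπ'def, ← Set.univ_prod, Measure.prod_prod, measure_univ, one_mul]
    exact ae_iff.1 hgK
  have hgind : (fun p => g p.2 * f p) =ᵐ[π'] fun p => Set.indicator {p : (EuclideanSpace ℝ (Fin m)) × (EuclideanSpace ℝ (Fin m)) | g p.2 ≠ 0} h p := by
    filter_upwards [hgKπ'] with p hp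
    by_cases h0 : g p.2 = 0
    · simp [hfdef, h0, Set.indicator_apply]
    · have hpt : g p.2 ≠ ∞ := (lt_of_le_of_lt hp (lt_top_iff_ne_top.2 hKt)).ne
      rw [Set.indicator_of_mem (by exact h0 : p ∈ {p : (EuclideanSpace ℝ (Fin m)) × (EuclideanSpace ℝ (Fin m)) | g p.2 ≠ 0})]
      rw [hfdef]
      rw [← mul_assoc, mul_comm (g p.2) (h p), mul_assoc, ENNReal.mul_inv_cancel h0 hpt, mul_one]
  have hindm : MeasurableSet {p : (EuclideanSpace ℝ (Fin m)) × (EuclideanSpace ℝ (Fin m)) | g p.2 ≠ 0} :=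
    ((hgm.comp measurable_snd) (measurableSet_singleton 0)).compl
  have hμf : π.withDensity f = μ := by
    ext s hs
    rw [hπ, withDensity_apply _ hs,
      setLIntegral_withDensity_eq_setLIntegral_mul (f := fun p : (EuclideanSpace ℝ (Fin m)) × (EuclideanSpace ℝ (Fin m)) => g p.2) π' (hgm.comp measurable_snd) hfm hs]
    have h1 : ∫⁻ p in s, ((fun p : (EuclideanSpace ℝ (Fin m)) × (EuclideanSpace ℝ (Fin m)) => g p.2) * f) p ∂π'
        = ∫⁻ p in s, Set.indicator {p : (EuclideanSpace ℝ (Fin m)) × (EuclideanSpace ℝ (Fin m)) | g p.2 ≠ 0} h p ∂π' :=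
      lintegral_congr_ae (ae_restrict_of_ae hgind)
    rw [h1]
    have h2 : ∫⁻ p in s, Set.indicator {p : (EuclideanSpace ℝ (Fin m)) × (EuclideanSpace ℝ (Fin m)) | g p.2 ≠ 0} h p ∂π'
        = ∫⁻ p in {p : (EuclideanSpace ℝ (Fin m)) × (EuclideanSpace ℝ (Fin m)) | g p.2 ≠ 0} ∩ s, h p ∂π' := by
      rw [← Measure.restrict_restrict hindm, ← lintegral_indicator hindm]
    rw [h2]
    have h3 : μ s = ∫⁻ p in s, h p ∂π' := by rw [← hμh, withDensity_apply _ hs]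
    have h4 : ∫⁻ p in s, h p ∂π'
        = ∫⁻ p in {p : (EuclideanSpace ℝ (Fin m)) × (EuclideanSpace ℝ (Fin m)) | g p.2 ≠ 0} ∩ s, h p ∂π'
          + ∫⁻ p in {p : (EuclideanSpace ℝ (Fin m)) × (EuclideanSpace ℝ (Fin m)) | g p.2 ≠ 0}ᶜ ∩ s, h p ∂π' := by
      rw [← Measure.restrict_restrict hindm, ← Measure.restrict_restrict hindm.compl]
      exact (lintegral_add_compl _ hindm).symm
    have h5 : ∫⁻ p in {p : (EuclideanSpace ℝ (Fin m)) × (EuclideanSpace ℝ (Fin m)) | g p.2 ≠ 0}ᶜ ∩ s, h p ∂π' = 0 := by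
      have hsub : {p : (EuclideanSpace ℝ (Fin m)) × (EuclideanSpace ℝ (Fin m)) | g p.2 ≠ 0}ᶜ ∩ s ⊆ {p : (EuclideanSpace ℝ (Fin m)) × (EuclideanSpace ℝ (Fin m)) | g p.2 = 0} := by
        intro p hp
        simpa using hp.1
      have hz : μ ({p : (EuclideanSpace ℝ (Fin m)) × (EuclideanSpace ℝ (Fin m)) | g p.2 ≠ 0}ᶜ ∩ s) = 0 :=
        measure_mono_null hsub hμg0
      have heq : ∫⁻ p in {p : (EuclideanSpace ℝ (Fin m)) × (EuclideanSpace ℝ (Fin m)) | g p.2 ≠ 0}ᶜ ∩ s, h p ∂π'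
          = μ ({p : (EuclideanSpace ℝ (Fin m)) × (EuclideanSpace ℝ (Fin m)) | g p.2 ≠ 0}ᶜ ∩ s) := by
        rw [← hμh, withDensity_apply _ (hindm.compl.inter hs)]
      rw [heq, hz]
    rw [h3, h4, h5, add_zero]
  have hacπ : μ ≪ π := hμf ▸ withDensity_absolutelyContinuous π f
  have hrnf : μ.rnDeriv π =ᵐ[π] f := hμf ▸ Measure.rnDeriv_withDensity π hfm
  have hrnfμ : μ.rnDeriv π =ᵐ[μ] f := hrnf.filter_mono hacπ.ae_le
  -- a.e. μ facts
  have hhpos : ∀ᵐ x ∂μ, 0 < h x := Measure.rnDeriv_pos hacπ'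
  have hhKμ : ∀ᵐ x ∂μ, h x ≤ K := hacπ'.ae_le hhK
  have hgposμ : ∀ᵐ x ∂μ, g x.2 ≠ 0 := by
    rw [ae_iff]
    simpa using hμg0
  have hgKμ : ∀ᵐ x ∂μ, g x.2 ≤ K := by
    have hBad : MeasurableSet {y : (EuclideanSpace ℝ (Fin m)) | ¬ g y ≤ K} := (hgm measurableSet_Iic).compl
    rw [ae_iff]
    have h1 : {x : (EuclideanSpace ℝ (Fin m)) × (EuclideanSpace ℝ (Fin m)) | ¬ g x.2 ≤ K} = Prod.snd ⁻¹' {y : (EuclideanSpace ℝ (Fin m)) | ¬ g y ≤ K} := rfl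
    rw [h1, ← Measure.map_apply measurable_snd hBad, hsnd]
    exact hacY (ae_iff.1 hgK)
  -- the llr decomposition
  have hllr : llr μ π =ᵐ[μ] fun x => Real.log (h x).toReal - Real.log (g x.2).toReal := by
    filter_upwards [hrnfμ, hhpos, hhKμ, hgposμ, hgKμ] with x hfx hhp hhk hgp hgk
    have hht : h x ≠ ∞ := (lt_of_le_of_lt hhk (lt_top_iff_ne_top.2 hKt)).ne
    have hgt : g x.2 ≠ ∞ := (lt_of_le_of_lt hgk (lt_top_iff_ne_top.2 hKt)).ne
    have hh0 : (h x).toReal ≠ 0 := ENNReal.toReal_ne_zero.2 ⟨hhp.ne', hht⟩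
    have hg0 : (g x.2).toReal ≠ 0 := ENNReal.toReal_ne_zero.2 ⟨hgp, hgt⟩
    rw [llr, hfx, hfdef]
    rw [ENNReal.toReal_mul, ENNReal.toReal_inv,
      Real.log_mul hh0 (inv_ne_zero hg0), Real.log_inv, ← sub_eq_add_neg]
  -- integrability
  have hφ1m : Measurable fun x : (EuclideanSpace ℝ (Fin m)) × (EuclideanSpace ℝ (Fin m)) => Real.log (h x).toReal :=
    Real.measurable_log.comp hhm.ennreal_toReal
  have hφ2m : Measurable fun y : (EuclideanSpace ℝ (Fin m)) => Real.log (g y).toReal :=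
    Real.measurable_log.comp hgm.ennreal_toReal
  have I1 : Integrable (fun x => Real.log (h x).toReal) μ := by
    rw [← hμh]
    exact integrable_log_toReal_withDensity π' hhm hKt hKr1 hhK
  have I2Y : Integrable (fun y => Real.log (g y).toReal) μY := by
    rw [← hQg]
    exact integrable_log_toReal_withDensity Q hgm hKt hKr1 hgK
  have I2 : Integrable (fun x : (EuclideanSpace ℝ (Fin m)) × (EuclideanSpace ℝ (Fin m)) => Real.log (g x.2).toReal) μ := by
    have := (integrable_map_measure hφ2m.aestronglyMeasurable
      measurable_snd.aemeasurable (μ := μ)).mp (by rw [hsnd]; exact I2Y)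
    exact this
  have Illr : Integrable (llr μ π) μ := (I1.sub I2).congr hllr.symm
  -- the integral bound
  have hint : ∫ x, llr μ π x ∂μ
      = (∫ x, Real.log (h x).toReal ∂μ) - ∫ x : (EuclideanSpace ℝ (Fin m)) × (EuclideanSpace ℝ (Fin m)), Real.log (g x.2).toReal ∂μ := by
    rw [integral_congr_ae hllr, integral_sub I1 I2]
  have bound1 : ∫ x, Real.log (h x).toReal ∂μ ≤ Real.log K.toReal := by
    have hae : ∀ᵐ x ∂μ, Real.log (h x).toReal ≤ Real.log K.toReal := by
      filter_upwards [hhpos, hhKμ] with x hhp hhk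
      have hht : h x ≠ ∞ := (lt_of_le_of_lt hhk (lt_top_iff_ne_top.2 hKt)).ne
      exact Real.log_le_log (ENNReal.toReal_pos hhp.ne' hht) (ENNReal.toReal_mono hKt hhk)
    calc ∫ x, Real.log (h x).toReal ∂μ ≤ ∫ _, Real.log K.toReal ∂μ :=
        integral_mono_ae I1 (integrable_const _) hae
      _ = Real.log K.toReal := by simp
  have bound2 : 0 ≤ ∫ x : (EuclideanSpace ℝ (Fin m)) × (EuclideanSpace ℝ (Fin m)), Real.log (g x.2).toReal ∂μ := by
    have hmap : ∫ x : (EuclideanSpace ℝ (Fin m)) × (EuclideanSpace ℝ (Fin m)), Real.log (g x.2).toReal ∂μ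
        = ∫ y, Real.log (g y).toReal ∂μY := by
      rw [← hsnd, integral_map measurable_snd.aemeasurable hφ2m.aestronglyMeasurable]
    rw [hmap]
    set g' : (EuclideanSpace ℝ (Fin m)) → NNReal := fun y => (g y).toNNReal with hg'def
    have hg'm : Measurable g' := hgm.ennreal_toNNReal
    have hQg' : Q.withDensity (fun y => ((g' y : ℝ≥0∞))) = μY := by
      rw [← hQg]
      refine withDensity_congr_ae ?_
      filter_upwards [hgK] with y hy
      exact ENNReal.coe_toNNReal (lt_of_le_of_lt hy (lt_top_iff_ne_top.2 hKt)).ne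
    rw [← hQg', integral_withDensity_eq_integral_smul hg'm]
    have hsmul : ∀ y, g' y • Real.log (g y).toReal
        = (g y).toReal * Real.log (g y).toReal := by
      intro y
      rw [NNReal.smul_def, smul_eq_mul, hg'def]
      rfl
    simp_rw [hsmul]
    have Iψ : Integrable (fun y => (g y).toReal * Real.log (g y).toReal) Q := by
      refine Integrable.mono' (integrable_const (1 + K.toReal * |Real.log K.toReal|))
        (hgm.ennreal_toReal.mul hφ2m).aestronglyMeasurable ?_
      filter_upwards [hgK] with y hy
      rw [Real.norm_eq_abs, abs_mul, abs_of_nonneg ENNReal.toReal_nonneg]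
      exact aux_mul_abs_log_le hKr1 ENNReal.toReal_nonneg (ENNReal.toReal_mono hKt hy)
    have Il : Integrable (fun y => (g y).toReal - 1) Q := by
      refine Integrable.sub ?_ (integrable_const 1)
      refine Integrable.mono' (integrable_const K.toReal)
        hgm.ennreal_toReal.aestronglyMeasurable ?_
      filter_upwards [hgK] with y hy
      rw [Real.norm_eq_abs, abs_of_nonneg ENNReal.toReal_nonneg]
      exact ENNReal.toReal_mono hKt hy
    have hgint : ∫ y, (g y).toReal ∂Q = 1 := by
      rw [integral_toReal hgm.aemeasurable]
      · have : ∫⁻ y, g y ∂Q = μY Set.univ := by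
          rw [← hQg, withDensity_apply _ MeasurableSet.univ, Measure.restrict_univ]
        rw [this, measure_univ, ENNReal.toReal_one]
      · filter_upwards [hgK] with y hy
        exact lt_of_le_of_lt hy (lt_top_iff_ne_top.2 hKt)
    have Ig : Integrable (fun y => (g y).toReal) Q := by
      refine Integrable.mono' (integrable_const K.toReal)
        hgm.ennreal_toReal.aestronglyMeasurable ?_
      filter_upwards [hgK] with y hy
      rw [Real.norm_eq_abs, abs_of_nonneg ENNReal.toReal_nonneg]
      exact ENNReal.toReal_mono hKt hy
    have hz : (0:ℝ) = ∫ y, ((g y).toReal - 1) ∂Q := by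
      rw [integral_sub Ig (integrable_const 1), hgint, integral_const, probReal_univ,
        one_smul]
      ring
    rw [hz]
    exact integral_mono Il Iψ fun y => aux_sub_one_le_mul_log ENNReal.toReal_nonneg
  -- conclusion
  have hintle : ∫ x, llr μ π x ∂μ ≤ Real.log K.toReal := by
    rw [hint]; linarith
  have hKrlog : Real.log K.toReal = m * Real.log ((c + ν) / ν) := by
    have hvb0 : volume (Metric.ball (0 : EuclideanSpace ℝ (Fin m)) 1) ≠ 0 :=
      (Metric.measure_ball_pos volume _ one_pos).ne'
    have hvbt : volume (Metric.ball (0 : EuclideanSpace ℝ (Fin m)) 1) ≠ ∞ :=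
      measure_ball_lt_top.ne
    have hc' : volume Bc
        = ENNReal.ofReal ((c + ν) ^ m) * volume (Metric.ball (0 : EuclideanSpace ℝ (Fin m)) 1) := by
      rw [hBc, Measure.addHaar_closedBall volume _ hcν.le, finrank_euclideanSpace_fin]
    have hν' : volume Bν
        = ENNReal.ofReal (ν ^ m) * volume (Metric.ball (0 : EuclideanSpace ℝ (Fin m)) 1) := by
      rw [hBν, Measure.addHaar_closedBall volume _ hν.le, finrank_euclideanSpace_fin]
    have hK : K = ENNReal.ofReal ((c + ν) ^ m) / ENNReal.ofReal (ν ^ m) := by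
      rw [hKdef, hc', hν', ENNReal.mul_div_mul_right _ _ hvb0 hvbt]
    rw [hK, ENNReal.toReal_div, ENNReal.toReal_ofReal (by positivity),
      ENNReal.toReal_ofReal (by positivity), ← div_pow, Real.log_pow]
  show klDiv μ π ≤ ENNReal.ofReal (m * Real.log ((c + ν) / ν))
  rw [klDiv, if_pos ⟨hacπ, Illr⟩]
  refine ENNReal.ofReal_le_ofReal ?_
  rw [← hKrlog]
  exact hintle
end
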